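/- Coproducts in the Grothendieck construction: let L : C^op → Cat be a strictly indexed category, ((W_i, w_i))_{i∈I} a family of objects of Σ_C L such that (1) the coproduct ⊔_{i∈I} W_i exists in C with coprojections ι_i, (2) each reindexing functor L(ι_i) has a left adjoint L(ι_i)!, and (3) the coproduct ⊔_{i∈I} L(ι_i)!(w_i) exists in L(⊔ W_i). Then (⊔_{i∈I} W_i, ⊔_{i∈I} L(ι_i)!(w_i)) is the coproduct of the (W_i, w_i) in Σ_C L. -/

import Mathlib

universe w₂ w₁ v u

open CategoryTheory CategoryTheory.Limits Opposite

namespace CHAD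

variable {C : Type u} [Category.{v} C]

/-- The total category (Grothendieck construction) `Σ_C L` of a strictly indexed category
`L : Cᵒᵖ ⥤ Cat`. -/
structure Total (L : Cᵒᵖ ⥤ Cat.{w₂, w₁}) where
  base : C
  fib : L.obj (op base)

namespace Total

variable {L : Cᵒᵖ ⥤ Cat.{w₂, w₁}}

/-- A morphism `(W, w) ⟶ (X, x)` in `Σ_C L` is a pair `(f : W ⟶ X, f̄ : w ⟶ L(f)(x))`. -/
structure Hom (X Y : Total L) where
  base : X.base ⟶ Y.base
  fib : X.fib ⟶ (L.map base.op).toFunctor.obj Y.fib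

theorem Hom.ext' {X Y : Total L} (f g : Hom X Y) (w_base : f.base = g.base)
    (w_fib : f.fib ≫ eqToHom (by rw [w_base]) = g.fib) : f = g := by
  cases f; cases g
  dsimp at w_base
  subst w_base
  simpa using w_fib

/-- Identity morphism. -/
def id (X : Total L) : Hom X X where
  base := 𝟙 X.base
  fib := eqToHom (by simp)

/-- Composition of morphisms. -/
def comp {X Y Z : Total L} (f : Hom X Y) (g : Hom Y Z) : Hom X Z where
  base := f.base ≫ g.base
  fib := f.fib ≫ (L.map f.base.op).toFunctor.map g.fib ≫ eqToHom (by rw [op_comp, Functor.map_comp]; rfl)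

attribute [local simp] eqToHom_map

instance : Category (Total L) where
  Hom X Y := Total.Hom X Y
  id X := Total.id X
  comp f g := Total.comp f g
  id_comp f := by
    refine Hom.ext' _ _ (by simp [comp, id]) ?_
    simp [comp, id]
    rw [Functor.congr_hom (congrArg Cat.Hom.toFunctor (L.map_id (op _))) f.fib]
    simp only [Cat.Hom.id_toFunctor, Functor.id_map, eqToHom_trans_assoc, Category.assoc]
    erw [eqToHom_trans, eqToHom_refl, Category.comp_id]
    exact Category.id_comp _
  comp_id f := by
    refine Hom.ext' _ _ (by simp [comp, id]) ?_
    simp [comp, id]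
    erw [eqToHom_trans, eqToHom_refl, Category.comp_id]
  assoc f g h := by
    refine Hom.ext' _ _ (by simp [comp, id]) ?_
    simp [comp, Functor.congr_hom (congrArg Cat.Hom.toFunctor (L.map_comp g.base.op f.base.op)) h.fib]
    erw [eqToHom_trans]

variable (L)

/-- The projection functor `Σ_C L ⥤ C`. -/
def proj : Total L ⥤ C where
  obj X := X.base
  map f := f.base
  map_id _ := rfl
  map_comp _ _ := rfl

end Total

end CHAD

/-!
Coproducts in the Grothendieck construction: let `L : Cᵒᵖ ⥤ Cat` be a strictly indexed
category and `((W_i, w_i))_{i ∈ I}` a family of objects of `Σ_C L` such that (1) the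
coproduct `⊔_i W_i` exists in `C` with coprojections `ι_i`, (2) each reindexing functor
`L(ι_i)` has a left adjoint `L(ι_i)!`, and (3) the coproduct `⊔_i L(ι_i)!(w_i)` exists in
`L(⊔ W_i)`.  Then `(⊔_i W_i, ⊔_i L(ι_i)!(w_i))` is the coproduct of the `(W_i, w_i)`
in `Σ_C L`.
-/

namespace CHAD

open CategoryTheory CategoryTheory.Limits Opposite

universe w


section Aux

variable {C : Type u} [Category.{v} C] {L : Cᵒᵖ ⥤ Cat.{w₂, w₁}}

theorem Total.comp_base {X Y Z : Total L} (f : X ⟶ Y) (g : Y ⟶ Z) :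
    (Total.Hom.base (f ≫ g)) = f.base ≫ g.base := rfl

theorem Total.comp_fib {X Y Z : Total L} (f : X ⟶ Y) (g : Y ⟶ Z) :
    (Total.Hom.fib (f ≫ g)) = f.fib ≫ (L.map f.base.op).toFunctor.map g.fib ≫
      eqToHom (by rw [Total.comp_base, op_comp, Functor.map_comp]; rfl) := rfl

theorem Total.Hom.fib_eq {X Y : Total L} {f g : Total.Hom X Y} (h : f = g) :
    f.fib = g.fib ≫ eqToHom (by rw [h]) := by subst h; simp

variable {I : Type w} {Wfam : I → Total L}
  (c : Cofan (fun i => (Wfam i).base)) (hc : IsColimit c)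

/-- The base of the descent morphism. -/
def descBase (s : Cofan Wfam) : c.pt ⟶ s.pt.base :=
  hc.desc (Cofan.mk s.pt.base fun i => (s.inj i).base)

theorem descBase_fac (s : Cofan Wfam) (i : I) : c.inj i ≫ descBase c hc s = (s.inj i).base :=
  hc.fac _ ⟨i⟩

theorem obj_eq (s : Cofan Wfam) (i : I) :
    (L.map (s.inj i).base.op).toFunctor.obj s.pt.fib =
      (L.map (c.inj i).op).toFunctor.obj ((L.map (descBase c hc s).op).toFunctor.obj s.pt.fib) := by
  rw [← descBase_fac c hc s i, op_comp, L.map_comp]; rfl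

/-- The transported fibre legs. -/
def fibLeg (s : Cofan Wfam) (i : I) :
    (Wfam i).fib ⟶ (L.map (c.inj i).op).toFunctor.obj ((L.map (descBase c hc s).op).toFunctor.obj s.pt.fib) :=
  (s.inj i).fib ≫ eqToHom (obj_eq c hc s i)

end Aux

theorem coproducts_in_total_category
    {C : Type u} [Category.{v} C] (L : Cᵒᵖ ⥤ Cat.{w₂, w₁})
    {I : Type w} (Wfam : I → Total L)
    -- (1) the coproduct of the bases exists in `C`, with coprojections `c.inj i`
    (c : Cofan (fun i => (Wfam i).base)) (hc : IsColimit c)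
    -- (2) each reindexing functor `L(ι_i)` has a left adjoint `Fi i`
    (Fi : ∀ i : I, (L.obj (op ((Wfam i).base))) ⥤ (L.obj (op c.pt)))
    (adj : ∀ i : I, Fi i ⊣ ((L.map (c.inj i).op).toFunctor : L.obj (op c.pt) ⥤ L.obj (op ((Wfam i).base))))
    -- (3) the coproduct of the pushforwards of the fibre components exists in `L(⊔ W_i)`
    (d : Cofan (fun i => (Fi i).obj (Wfam i).fib)) (hd : IsColimit d) :
    Nonempty (IsColimit (Cofan.mk (⟨c.pt, d.pt⟩ : Total L)
      (fun i => (⟨c.inj i,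
        (adj i).unit.app (Wfam i).fib ≫ (L.map (c.inj i).op).toFunctor.map (d.inj i)⟩ :
          Wfam i ⟶ ⟨c.pt, d.pt⟩)))) := by
  refine ⟨mkCofanColimit _ (fun s => ⟨descBase c hc s,
    hd.desc (Cofan.mk ((L.map (descBase c hc s).op).toFunctor.obj s.pt.fib)
      fun i => ((adj i).homEquiv _ _).symm (fibLeg c hc s i))⟩) ?_ ?_⟩
  · intro s i
    refine Total.Hom.ext' _ _ (descBase_fac c hc s i) ?_
    rw [Total.comp_fib]
    dsimp only [cofan_mk_inj]
    simp only [Category.assoc, eqToHom_trans]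
    rw [← Functor.map_comp_assoc]
    have hk : d.inj i ≫ _ = _ := hd.fac (Cofan.mk ((L.map (descBase c hc s).op).toFunctor.obj s.pt.fib)
      fun i => ((adj i).homEquiv _ _).symm (fibLeg c hc s i)) ⟨i⟩
    dsimp only [Cofan.mk_ι_app] at hk
    rw [hk, ← Category.assoc, ← Adjunction.homEquiv_unit, Equiv.apply_symm_apply]
    simp [fibLeg]
    erw [eqToHom_trans, eqToHom_trans, eqToHom_refl, Category.comp_id]
  · intro s m hm
    have hb : m.base = descBase c hc s := hc.uniq (Cofan.mk s.pt.base fun i => (s.inj i).base)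
      m.base (fun ⟨i⟩ => congrArg Total.Hom.base (hm i))
    refine Total.Hom.ext' _ _ hb ?_
    refine hd.uniq (Cofan.mk ((L.map (descBase c hc s).op).toFunctor.obj s.pt.fib)
      fun i => ((adj i).homEquiv _ _).symm (fibLeg c hc s i)) _ (fun ⟨i⟩ => ?_)
    dsimp
    apply ((adj i).homEquiv _ _).injective
    rw [Equiv.apply_symm_apply, Adjunction.homEquiv_unit]
    have key := Total.Hom.fib_eq (hm i)
    rw [Total.comp_fib] at key
    dsimp only [cofan_mk_inj] at key ⊢
    have E' : (L.map (c.inj i ≫ m.base).op).toFunctor.obj s.pt.fib =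
        (L.map (c.inj i).op).toFunctor.obj ((L.map (descBase c hc s).op).toFunctor.obj s.pt.fib) := by
      rw [hb, op_comp, L.map_comp]; rfl
    have key2 := congrArg (fun t => t ≫ eqToHom E') key
    erw [Category.assoc, Category.assoc, Category.assoc, Category.assoc] at key2
    erw [eqToHom_trans, eqToHom_trans] at key2
    simp only [fibLeg, Cofan.inj, Functor.map_comp, eqToHom_map, Category.assoc]
    exact key2


end CHAD
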